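/- For a uniformly random single translocation on a permutation of odd length n, the probability that the center position ⌈n/2⌉ is displaced equals 1/2 + 2/(n−1) − 2/(n−1)². -/

import Mathlib

namespace CD

/-- value at position `k` of the word obtained by moving entry `i` to position `j`. -/
def F (i j k : ℕ) : ℕ :=
  if k < j then (if k < i then k else k + 1)
  else if k = j then i
  else if k - 1 < i then k - 1 else k

def f (n : ℕ) (p : ℕ × ℕ) : List ℕ := ((List.range n).eraseIdx p.1).insertIdx p.2 p.1

lemma length_erase {n i : ℕ} (hi : i < n) : ((List.range n).eraseIdx i).length = n - 1 := by
  rw [List.length_eraseIdx]; simp [hi]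

lemma length_f {n i j : ℕ} (hi : i < n) (hj : j < n) : (f n (i, j)).length = n := by
  unfold f
  rw [List.length_insertIdx_of_le_length (by rw [length_erase hi]; omega) _, length_erase hi]
  omega

lemma getElem_f {n i j k : ℕ} (hi : i < n) (hj : j < n) (hk : k < n)
    (h : k < (f n (i, j)).length) : (f n (i, j))[k] = F i j k := by
  unfold f at *
  rcases lt_trichotomy k j with h1 | h1 | h1
  · rw [List.getElem_insertIdx_of_lt h1 h]
    simp only [List.getElem_eraseIdx, List.getElem_range, F]
    split_ifs <;> omega
  · subst h1
    rw [List.getElem_insertIdx_self h]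
    simp [F]
  · obtain ⟨d, rfl⟩ : ∃ d, k = j + d + 1 := ⟨k - j - 1, by omega⟩
    rw [List.getElem_insertIdx_add_succ _ _ _ _ (by rw [length_erase hi]; omega)]
    simp only [List.getElem_eraseIdx, List.getElem_range, F]
    split_ifs <;> omega

lemma getD_f {n i j k : ℕ} (hi : i < n) (hj : j < n) (hk : k < n) :
    (f n (i, j)).getD k 0 = F i j k := by
  rw [List.getD_eq_getElem _ _ (by rw [length_f hi hj]; exact hk), getElem_f hi hj hk]

lemma f_id {n i : ℕ} (hi : i < n) : f n (i, i) = List.range n := by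
  apply List.ext_getElem (by rw [length_f hi hi, List.length_range])
  intro k h1 h2
  rw [getElem_f hi hi (by simpa using h2), List.getElem_range]
  unfold F; split_ifs <;> omega

lemma f_ne_range {n i j : ℕ} (hi : i < n) (hj : j < n) (hij : i ≠ j) :
    f n (i, j) ≠ List.range n := by
  intro h
  have h1 : (f n (i, j)).getD (min i j) 0 = (List.range n).getD (min i j) 0 := by rw [h]
  rw [getD_f hi hj (by omega),
    List.getD_eq_getElem _ _ (by rw [List.length_range]; omega), List.getElem_range] at h1
  revert h1; unfold F; split_ifs <;> omega

lemma f_swap {n j : ℕ} (h : j + 1 < n) : f n (j + 1, j) = f n (j, j + 1) := by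
  apply List.ext_getElem (by rw [length_f h (by omega), length_f (by omega) h])
  intro k h1 h2
  have hk : k < n := by rwa [length_f h (by omega)] at h1
  rw [getElem_f h (by omega) hk, getElem_f (by omega) h hk]
  unfold F; split_ifs <;> omega

lemma F_inj {n i j i' j' : ℕ} (hi : i < n) (hj : j < n) (hi' : i' < n) (hj' : j' < n)
    (hij : i ≠ j) (hij1 : i ≠ j + 1) (h2ij : i' ≠ j') (h2ij1 : i' ≠ j' + 1)
    (h : ∀ k, k < n → F i j k = F i' j' k) : i = i' ∧ j = j' := by
  have hm : min i j = min i' j' := by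
    rcases lt_trichotomy (min i j) (min i' j') with hlt | heq | hgt
    · have h1 := h (min i j) (by omega)
      revert h1; unfold F; split_ifs <;> omega
    · exact heq
    · have h1 := h (min i' j') (by omega)
      revert h1; unfold F; split_ifs <;> omega
  have hii' : i = i' := by
    have h1 := h (min i j) (by omega)
    revert h1; unfold F; split_ifs <;> omega
  refine ⟨hii', ?_⟩
  have h2 := h j' hj'
  have h3 : F i' j' j' = i' := by unfold F; simp
  rw [h3, ← hii'] at h2
  revert h2; unfold F; split_ifs <;> omega

lemma Fd {i j c : ℕ} (hc : 1 ≤ c) :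
    (F i j c ≠ c) ↔ ((c < j ∧ i ≤ c) ∨ (j = c ∧ i ≠ c) ∨ (j < c ∧ c ≤ i)) := by
  unfold F; split_ifs <;> omega

end CD

/-- The set of words of nonidentity translocations on `[n]` (0-indexed):
the identity word with some entry `i` moved to position `j`, excluding the identity. -/
def transWords (n : ℕ) : Finset (List ℕ) :=
  (((Finset.range n) ×ˢ (Finset.range n)).image
      (fun p : ℕ × ℕ => ((List.range n).eraseIdx p.1).insertIdx p.2 p.1)) \
    {List.range n}

namespace CD

lemma transWords_eq (n : ℕ) :
    transWords n = (((Finset.range n) ×ˢ (Finset.range n)).image (f n)) \ {List.range n} := rfl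

lemma card_key (c : ℕ) (hc : 1 ≤ c) :
    ((transWords (2 * c + 1)).filter (fun w => w.getD c 0 ≠ c)).card
      = 2 * c ^ 2 + 4 * c - 2 := by
  set n := 2 * c + 1 with hn
  have hcn : c < n := by omega
  set S : Finset (ℕ × ℕ) := ((Finset.range n) ×ˢ (Finset.range n)).filter
      (fun p => p.1 ≠ p.2 ∧ p.1 ≠ p.2 + 1 ∧ F p.1 p.2 c ≠ c) with hS
  have hset : (transWords n).filter (fun w => w.getD c 0 ≠ c) = S.image (f n) := by
    ext w
    simp only [transWords_eq, Finset.mem_filter, Finset.mem_sdiff, Finset.mem_image,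
      Finset.mem_singleton, Finset.mem_product, Finset.mem_range, hS]
    constructor
    · rintro ⟨⟨⟨⟨i, j⟩, ⟨hi, hj⟩, rfl⟩, hne⟩, hdisp⟩
      rcases eq_or_ne i j with rfl | hij
      · exact absurd (f_id hi) hne
      rcases eq_or_ne i (j + 1) with rfl | hij1
      · refine ⟨(j, j + 1), ⟨⟨by omega, hi⟩, by omega, by omega, ?_⟩, (f_swap hi).symm⟩
        rw [← getD_f (n := n) (by omega) hi hcn, ← f_swap hi]
        exact hdisp
      · refine ⟨(i, j), ⟨⟨hi, hj⟩, hij, hij1, ?_⟩, rfl⟩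
        rw [← getD_f hi hj hcn]; exact hdisp
    · rintro ⟨⟨i, j⟩, ⟨⟨hi, hj⟩, hij, hij1, hd⟩, rfl⟩
      exact ⟨⟨⟨⟨i, j⟩, ⟨hi, hj⟩, rfl⟩, f_ne_range hi hj hij⟩, by rwa [getD_f hi hj hcn]⟩
  rw [hset, Finset.card_image_of_injOn]
  · -- card S
    have hSeq : S = ((Finset.range (c + 1)) ×ˢ (Finset.Ico (c + 1) n)
        ∪ ((Finset.range n) \ {c, c + 1}) ×ˢ {c})
        ∪ (((Finset.Ico c n) ×ˢ (Finset.range c)) \ {(c, c - 1)}) := by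
      ext ⟨i, j⟩
      simp only [hS, Finset.mem_filter, Finset.mem_product, Finset.mem_range, Fd hc,
        Finset.mem_union, Finset.mem_sdiff, Finset.mem_Ico, Finset.mem_singleton,
        Finset.mem_insert, Prod.mk.injEq]
      omega
    have hA : ((Finset.range (c + 1)) ×ˢ (Finset.Ico (c + 1) n)).card = (c + 1) * c := by
      rw [Finset.card_product, Finset.card_range, Nat.card_Ico,
        show n - (c + 1) = c from by omega]
    have hB : (((Finset.range n) \ {c, c + 1}) ×ˢ ({c} : Finset ℕ)).card = 2 * c - 1 := by
      rw [Finset.card_product, Finset.card_sdiff_of_subset (by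
        intro x hx
        simp only [Finset.mem_insert, Finset.mem_singleton] at hx
        simp only [Finset.mem_range]
        omega)]
      rw [Finset.card_insert_of_notMem (by simp), Finset.card_singleton,
        Finset.card_range, Finset.card_singleton]
      omega
    have hC : (((Finset.Ico c n) ×ˢ (Finset.range c)) \ {(c, c - 1)}).card
        = (c + 1) * c - 1 := by
      rw [Finset.card_sdiff_of_subset (by
        intro x hx
        simp only [Finset.mem_singleton] at hx
        subst hx
        simp only [Finset.mem_product, Finset.mem_Ico, Finset.mem_range]
        omega)]
      rw [Finset.card_product, Nat.card_Ico, Finset.card_range, Finset.card_singleton]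
      have : n - c = c + 1 := by omega
      rw [this]
    rw [hSeq, Finset.card_union_of_disjoint, Finset.card_union_of_disjoint, hA, hB, hC]
    · have e1 : 1 <= 2 * c := by omega
      have e2 : 1 <= (c + 1) * c := by nlinarith
      have e3 : 2 <= 2 * c ^ 2 + 4 * c := by nlinarith
      zify [e1, e2, e3]
      ring
    · -- disjoint A B
      rw [Finset.disjoint_left]
      rintro ⟨i, j⟩ h1 h2
      simp only [Finset.mem_product, Finset.mem_range, Finset.mem_Ico, Finset.mem_sdiff,
        Finset.mem_singleton, Finset.mem_insert] at h1 h2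
      omega
    · -- disjoint (A∪B) C
      rw [Finset.disjoint_left]
      rintro ⟨i, j⟩ h1 h2
      simp only [Finset.mem_union, Finset.mem_product, Finset.mem_range, Finset.mem_Ico,
        Finset.mem_sdiff, Finset.mem_singleton, Finset.mem_insert, Prod.mk.injEq] at h1 h2
      omega
  · -- injectivity
    rintro ⟨i, j⟩ hij ⟨i', j'⟩ hij' heq
    simp only [hS, Finset.mem_coe, Finset.mem_filter, Finset.mem_product, Finset.mem_range]
      at hij hij'
    obtain ⟨⟨hi, hj⟩, h1, h2, -⟩ := hij
    obtain ⟨⟨hi', hj'⟩, h1', h2', -⟩ := hij'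
    have hFk : ∀ k, k < n → F i j k = F i' j' k := by
      intro k hk
      rw [← getD_f hi hj hk, ← getD_f hi' hj' hk, heq]
    obtain ⟨e1, e2⟩ := F_inj hi hj hi' hj' h1 h2 h1' h2' hFk
    simp [e1, e2]

end CD

/-- For a uniformly random nonidentity translocation on a permutation of odd length
`n`, the probability that the center position `⌈n/2⌉ = (n+1)/2` is displaced equals
`1/2 + 2/(n−1) − 2/(n−1)²`. -/
theorem center_displacement_probability_odd (n : ℕ) (hn : 3 ≤ n) (hodd : Odd n) :
    (((transWords n).filter
          (fun w => w.getD ((n + 1) / 2 - 1) 0 ≠ (n + 1) / 2 - 1)).card : ℚ)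
        / ((n : ℚ) - 1) ^ 2
      = 1 / 2 + 2 / ((n : ℚ) - 1) - 2 / ((n : ℚ) - 1) ^ 2 := by
  obtain ⟨c, rfl⟩ : ∃ c, n = 2 * c + 1 := by
    obtain ⟨m, hm⟩ := hodd; exact ⟨m, by omega⟩
  have hc : 1 ≤ c := by omega
  have hidx : (2 * c + 1 + 1) / 2 - 1 = c := by omega
  rw [hidx, CD.card_key c hc]
  have hcast : ((2 * c ^ 2 + 4 * c - 2 : ℕ) : ℚ) = 2 * (c : ℚ) ^ 2 + 4 * c - 2 := by
    have : 2 ≤ 2 * c ^ 2 + 4 * c := by nlinarith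
    push_cast [Nat.cast_sub this]
    ring
  rw [hcast]
  have hne : ((2 * c + 1 : ℕ) : ℚ) - 1 ≠ 0 := by
    push_cast
    have : (1 : ℚ) ≤ (c : ℚ) := by exact_mod_cast hc
    nlinarith
  push_cast at hne ⊢
  field_simp
  ring
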